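/- For every integer n ≥ 1 and every real number α, the sum over all set partitions P of {1,…,n} of α^{#P} · ∏_{b ∈ P} (#b − 1)! equals the rising factorial α^{↑n} = α(α+1)⋯(α+n−1). (Equivalently, the Ewens(α) weights α^{#P} ∏_{b∈P} Γ(#b) on set partitions of [n] have total mass α^{↑n}.) -/

import Mathlib

/-- The rising factorial `x^{↑n} = x(x+1)⋯(x+n−1)`. -/
def risingFactorial (x : ℝ) (n : ℕ) : ℝ := ∏ i ∈ Finset.range n, (x + i)

open Finset

lemma risingFactorial_succ (x : ℝ) (n : ℕ) :
    risingFactorial x (n + 1) = risingFactorial x n * (x + n) := by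
  simp [risingFactorial, Finset.prod_range_succ]

lemma risingFactorial_succ' (x : ℝ) (n : ℕ) :
    risingFactorial x (n + 1) = x * risingFactorial (x + 1) n := by
  rw [risingFactorial, risingFactorial, Finset.prod_range_succ']
  simp only [Nat.cast_zero, add_zero, Nat.cast_add, Nat.cast_one]
  rw [mul_comm]
  congr 1
  exact Finset.prod_congr rfl fun i _ => by ring

lemma aux_sum (x : ℝ) (m : ℕ) :
    ∑ k ∈ range (m + 1), (m.choose k * k.factorial : ℝ) * risingFactorial x (m - k)
      = risingFactorial (x + 1) m := by
  induction m with
  | zero => simp [risingFactorial]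
  | succ m ih =>
    rw [Finset.sum_range_succ']
    have h1 : ∀ k : ℕ, ((m + 1).choose (k + 1) * (k + 1).factorial : ℝ)
        = (m + 1) * (m.choose k * k.factorial) := by
      intro k
      have h' : (m + 1).choose (k + 1) * (k + 1) = (m + 1) * m.choose k :=
        (Nat.add_one_mul_choose_eq m k).symm
      have : (m + 1).choose (k + 1) * (k + 1).factorial
          = (m + 1) * (m.choose k * k.factorial) := by
        rw [Nat.factorial_succ, ← mul_assoc, h', mul_assoc]
      exact_mod_cast this
    have h2 : ∀ k ∈ range (m + 1),
        ((m + 1).choose (k + 1) * (k + 1).factorial : ℝ) * risingFactorial x (m + 1 - (k + 1))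
        = (m + 1) * ((m.choose k * k.factorial) * risingFactorial x (m - k)) := by
      intro k _
      rw [h1, Nat.add_sub_add_right]
      ring
    rw [Finset.sum_congr rfl h2, ← Finset.mul_sum, ih]
    simp only [Nat.choose_zero_right, Nat.factorial_zero, Nat.cast_one, one_mul,
      Nat.sub_zero, mul_one]
    rw [risingFactorial_succ', risingFactorial_succ]
    push_cast
    ring

lemma avoid_parts_of_mem {β : Type*} [DecidableEq β] {s : Finset β} (P : Finpartition s)
    {b : Finset β} (hb : b ∈ P.parts) : (P.avoid b).parts = P.parts.erase b := by
  ext c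
  simp only [Finpartition.mem_avoid, mem_erase]
  constructor
  · rintro ⟨d, hd, hdb, rfl⟩
    have hdb' : d ≠ b := by rintro rfl; exact hdb le_rfl
    have hdisj : Disjoint d b := P.disjoint hd hb hdb'
    rw [Finset.sdiff_eq_self_iff_disjoint.2 hdisj]
    exact ⟨hdb', hd⟩
  · rintro ⟨hcb, hc⟩
    have hdisj : Disjoint c b := P.disjoint hc hb hcb
    exact ⟨c, hc, fun hle => P.bot_notMem
      ((le_bot_iff.1 ((le_inf le_rfl hle).trans hdisj.le_bot)) ▸ hc),
      Finset.sdiff_eq_self_iff_disjoint.2 hdisj⟩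

lemma ewens_main {β : Type*} [DecidableEq β] (x : ℝ) :
    ∀ (n : ℕ) (s : Finset β), s.card = n →
      ∑ P : Finpartition s,
        x ^ P.parts.card * ∏ b ∈ P.parts, (Nat.factorial (b.card - 1) : ℝ)
        = risingFactorial x n := by
  intro n
  induction n using Nat.strong_induction_on with
  | _ n ih =>
    intro s hs
    rcases n with _ | m
    · have hse : s = ∅ := card_eq_zero.1 hs
      subst hse
      haveI : Unique (Finpartition (∅ : Finset β)) :=
        inferInstanceAs (Unique (Finpartition (⊥ : Finset β)))
      rw [Fintype.sum_unique]
      have hparts : (default : Finpartition (∅ : Finset β)).parts = ∅ :=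
        Finpartition.parts_eq_empty_iff.2 rfl
      simp [hparts, risingFactorial]
    · obtain ⟨a, ha⟩ : s.Nonempty := card_pos.1 (by omega)
      have hmaps : ∀ P ∈ (univ : Finset (Finpartition s)),
          (P.part a).erase a ∈ (s.erase a).powerset := fun P _ =>
        mem_powerset.2 (erase_subset_erase _ (P.le (P.part_mem.2 ha)))
      rw [← Finset.sum_fiberwise_of_maps_to hmaps]
      have key : ∀ t ∈ (s.erase a).powerset,
          ∑ P ∈ univ.filter (fun P : Finpartition s => (P.part a).erase a = t),
            x ^ P.parts.card * ∏ b ∈ P.parts, (Nat.factorial (b.card - 1) : ℝ)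
          = x * t.card.factorial * risingFactorial x (m - t.card) := by
        intro t ht
        rw [mem_powerset] at ht
        have hat : a ∉ t := fun h => (mem_erase.1 (ht h)).1 rfl
        have hts : insert a t ⊆ s := insert_subset ha (ht.trans (erase_subset _ _))
        have hb0 : (insert a t : Finset β) ≠ ⊥ := by
          simp [← Finset.nonempty_iff_ne_empty, insert_nonempty]
        have hdisj : Disjoint (s \ insert a t) (insert a t) := sdiff_disjoint
        have hsup : (s \ insert a t) ⊔ insert a t = s := sdiff_sup_cancel hts
        have hcardb0 : (insert a t).card = t.card + 1 := card_insert_of_notMem hat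
        have hcard : (s \ insert a t).card = m - t.card := by
          rw [card_sdiff_of_subset hts, hcardb0, hs]; omega
        have hb0notmem : ∀ Q : Finpartition (s \ insert a t), insert a t ∉ Q.parts := by
          intro Q hmem
          have := Q.le hmem (mem_insert_self a t)
          exact (mem_sdiff.1 this).2 (mem_insert_self a t)
        have hsummand : ∀ Q : Finpartition (s \ insert a t),
            x ^ (Q.extend hb0 hdisj hsup).parts.card
              * ∏ b ∈ (Q.extend hb0 hdisj hsup).parts, (Nat.factorial (b.card - 1) : ℝ)
            = x * t.card.factorial
              * (x ^ Q.parts.card * ∏ b ∈ Q.parts, (Nat.factorial (b.card - 1) : ℝ)) := by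
          intro Q
          rw [Finpartition.extend_parts, card_insert_of_notMem (hb0notmem Q),
            prod_insert (hb0notmem Q), hcardb0]
          simp only [Nat.add_sub_cancel]
          ring
        have step : ∑ P ∈ univ.filter (fun P : Finpartition s => (P.part a).erase a = t),
            x ^ P.parts.card * ∏ b ∈ P.parts, (Nat.factorial (b.card - 1) : ℝ)
            = ∑ Q ∈ (univ : Finset (Finpartition (s \ insert a t))),
              x * t.card.factorial
                * (x ^ Q.parts.card * ∏ b ∈ Q.parts, (Nat.factorial (b.card - 1) : ℝ)) := by
          refine Finset.sum_nbij' (fun P : Finpartition s => P.avoid (insert a t))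
            (fun Q : Finpartition (s \ insert a t) => Q.extend hb0 hdisj hsup)
            (fun P _ => mem_univ _) ?_ ?_ ?_ ?_
          · intro Q _
            simp only [mem_filter, mem_univ, true_and]
            have hpa : (Q.extend hb0 hdisj hsup).part a = insert a t :=
              Finpartition.part_eq_of_mem _ (by
                rw [Finpartition.extend_parts]; exact mem_insert_self _ _)
                (mem_insert_self a t)
            rw [hpa, erase_insert hat]
          · intro P hP
            simp only [mem_filter, mem_univ, true_and] at hP
            have hpa : P.part a = insert a t := by
              rw [← hP, insert_erase (P.mem_part ha)]
            have hb0mem : insert a t ∈ P.parts := hpa ▸ P.part_mem.2 ha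
            apply Finpartition.ext
            rw [Finpartition.extend_parts, avoid_parts_of_mem P hb0mem,
              insert_erase hb0mem]
          · intro Q _
            apply Finpartition.ext
            rw [avoid_parts_of_mem _ (by
              rw [Finpartition.extend_parts]; exact mem_insert_self _ _),
              Finpartition.extend_parts, erase_insert (hb0notmem Q)]
          · intro P hP
            simp only [mem_filter, mem_univ, true_and] at hP
            have hpa : P.part a = insert a t := by
              rw [← hP, insert_erase (P.mem_part ha)]
            have hb0mem : insert a t ∈ P.parts := hpa ▸ P.part_mem.2 ha
            have hPeq : ((P.avoid (insert a t)).extend hb0 hdisj hsup) = P := by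
              apply Finpartition.ext
              rw [Finpartition.extend_parts, avoid_parts_of_mem P hb0mem,
                insert_erase hb0mem]
            rw [← hsummand (P.avoid (insert a t)), hPeq]
        rw [step, ← Finset.mul_sum, ih (m - t.card) (by omega) _ hcard]
      rw [Finset.sum_congr rfl key, Finset.sum_powerset]
      have hcerase : (s.erase a).card = m := by
        rw [card_erase_of_mem ha, hs]; rfl
      have inner : ∀ j ∈ range ((s.erase a).card + 1),
          ∑ t ∈ powersetCard j (s.erase a),
            x * t.card.factorial * risingFactorial x (m - t.card)
          = (m.choose j * j.factorial : ℝ) * risingFactorial x (m - j) * x := by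
        intro j _
        rw [Finset.sum_congr rfl (fun t htc => by
          rw [(mem_powersetCard.1 htc).2]), Finset.sum_const, card_powersetCard, hcerase]
        push_cast
        ring
      rw [Finset.sum_congr rfl inner, hcerase, ← Finset.sum_mul, aux_sum,
        risingFactorial_succ']
      ring

/-- The Ewens(α) weights `α^{#P} ∏_{b∈P} (#b − 1)!` on set partitions of `[n]`
have total mass `α^{↑n}`. -/
theorem ewens_partition_normalization (n : ℕ) (hn : 1 ≤ n) (α : ℝ) :
    ∑ P : Finpartition (Finset.univ : Finset (Fin n)),
      α ^ P.parts.card * ∏ b ∈ P.parts, (Nat.factorial (b.card - 1) : ℝ) =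
    risingFactorial α n := by
  exact ewens_main α n (Finset.univ : Finset (Fin n)) (by simp)
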